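/- Let L, R, k be positive integers, χ > 0, Φ ∈ ℂ^{L×k} and Ψ ∈ ℂ^{R×k}. Assume the uniform overlap condition for both matrices: s_min(Φ) ≥ ‖Φ‖_F/((1+χ)·√k) and s_min(Ψ) ≥ ‖Ψ‖_F/((1+χ)·√k). Define p_min = min_{m∈[k]} ‖Φ_{:,m}‖·‖Ψ_{:,m}‖. Then every one of the k largest singular values of Φ·Ψᴴ is at least p_min/(1+χ)²; in particular s_k(Φ·Ψᴴ) ≥ p_min/(1+χ)². -/

import Mathlib

open Matrix

/-- Frobenius norm of a complex matrix. -/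
noncomputable def frob {m n : Type*} [Fintype m] [Fintype n] (A : Matrix m n ℂ) : ℝ :=
  Real.sqrt (∑ i, ∑ j, ‖A i j‖ ^ 2)

/-- Euclidean norm of the `m`-th column of a matrix. -/
noncomputable def colNorm {l m : Type*} [Fintype l] (A : Matrix l m ℂ) (j : m) : ℝ :=
  Real.sqrt (∑ i, ‖A i j‖ ^ 2)

/-- Smallest singular value of a matrix `A` with `n` columns: the square root of the
smallest eigenvalue of the Hermitian PSD matrix `AᴴA`. -/
noncomputable def smin {l : Type*} [Fintype l] {n : ℕ} (hn : 0 < n)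
    (A : Matrix l (Fin n) ℂ) : ℝ :=
  Real.sqrt (Finset.univ.inf' (Finset.univ_nonempty_iff.mpr ⟨⟨0, hn⟩⟩)
    (Matrix.isHermitian_conjTranspose_mul_self A).eigenvalues)

/-- The singular values of a complex matrix with `R` columns (unordered). -/
noncomputable def sv {l : Type*} [Fintype l] {R : ℕ} (A : Matrix l (Fin R) ℂ) (j : Fin R) : ℝ :=
  Real.sqrt ((Matrix.isHermitian_conjTranspose_mul_self A).eigenvalues j)

/-- The `j`-th largest value of the tuple `f` (with `j = 0` giving the largest). -/
noncomputable def nthLargest {n : ℕ} (f : Fin n → ℝ) (j : Fin n) : ℝ :=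
  (f ∘ Tuple.sort f) j.rev

lemma quadform_diag {n : ℕ} (U : Matrix (Fin n) (Fin n) ℂ) (d : Fin n → ℂ) (x : Fin n → ℂ) :
    star x ⬝ᵥ (U * diagonal d * star U) *ᵥ x
      = ∑ i, d i * ((‖(star U *ᵥ x) i‖ : ℂ) ^ 2) := by
  have hsy : star x ᵥ* U = star (star U *ᵥ x) := by
    rw [star_mulVec, star_eq_conjTranspose, conjTranspose_conjTranspose]
  rw [← mulVec_mulVec, ← mulVec_mulVec, dotProduct_mulVec, hsy]
  simp only [dotProduct, mulVec_diagonal, Pi.star_apply]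
  refine Finset.sum_congr rfl fun i _ => ?_
  set z := (star U *ᵥ x) i
  rw [show star z * (d i * z) = d i * (z * star z) by ring]
  congr 1
  rw [← Complex.ofReal_pow]
  exact_mod_cast Complex.mul_conj' z

lemma quadform_diag_re {n : ℕ} (U : Matrix (Fin n) (Fin n) ℂ) (d : Fin n → ℝ) (x : Fin n → ℂ) :
    (star x ⬝ᵥ (U * diagonal (fun i => (d i : ℂ)) * star U) *ᵥ x).re
      = ∑ i, d i * ‖(star U *ᵥ x) i‖ ^ 2 := by
  rw [quadform_diag]
  rw [show ∑ i, ((d i : ℂ)) * ((‖(star U *ᵥ x) i‖ : ℂ)) ^ 2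
      = ((∑ i, d i * ‖(star U *ᵥ x) i‖ ^ 2 : ℝ) : ℂ) by push_cast; ring]
  exact Complex.ofReal_re _

lemma selfquad_re {l n : Type*} [Fintype l] [Fintype n] (A : Matrix l n ℂ) (x : n → ℂ) :
    (star x ⬝ᵥ (Aᴴ * A) *ᵥ x).re = ∑ j, ‖(A *ᵥ x) j‖ ^ 2 := by
  rw [← mulVec_mulVec, dotProduct_mulVec, ← star_mulVec]
  rw [show star (A *ᵥ x) ⬝ᵥ (A *ᵥ x) = ((∑ j, ‖(A *ᵥ x) j‖ ^ 2 : ℝ) : ℂ) by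
    simp only [dotProduct, Pi.star_apply]
    push_cast
    refine Finset.sum_congr rfl fun j _ => ?_
    rw [show star ((A *ᵥ x) j) * (A *ᵥ x) j = (A *ᵥ x) j * star ((A *ᵥ x) j) by ring]
    rw [← Complex.ofReal_pow]
    exact_mod_cast Complex.mul_conj' _]
  exact Complex.ofReal_re _

lemma herm_quadform_re {n : ℕ} {M : Matrix (Fin n) (Fin n) ℂ} (hM : M.IsHermitian) (x : Fin n → ℂ) :
    (star x ⬝ᵥ M *ᵥ x).re
      = ∑ i, hM.eigenvalues i *
          ‖(star (hM.eigenvectorUnitary : Matrix (Fin n) (Fin n) ℂ) *ᵥ x) i‖ ^ 2 := by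
  conv_lhs => rw [hM.spectral_theorem]
  exact quadform_diag_re _ hM.eigenvalues x

lemma norm_pres {n : ℕ} {M : Matrix (Fin n) (Fin n) ℂ} (hM : M.IsHermitian) (x : Fin n → ℂ) :
    ∑ i, ‖(star (hM.eigenvectorUnitary : Matrix (Fin n) (Fin n) ℂ) *ᵥ x) i‖ ^ 2
      = ∑ i, ‖x i‖ ^ 2 := by
  set U : Matrix (Fin n) (Fin n) ℂ := (hM.eigenvectorUnitary : Matrix (Fin n) (Fin n) ℂ)
  have h1 : U * diagonal (fun _ : Fin n => ((1:ℝ) : ℂ)) * star U = 1 := by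
    rw [show (fun _ : Fin n => ((1:ℝ):ℂ)) = fun _ : Fin n => (1:ℂ) by norm_num,
      diagonal_one, mul_one]
    exact (Matrix.mem_unitaryGroup_iff).mp hM.eigenvectorUnitary.2
  have h2 := quadform_diag_re U (fun _ => (1:ℝ)) x
  rw [h1] at h2
  simp only [one_mul, one_mulVec] at h2
  rw [← h2]
  rw [show star x ⬝ᵥ x = ((∑ j, ‖x j‖ ^ 2 : ℝ) : ℂ) by
    simp only [dotProduct, Pi.star_apply]
    push_cast
    refine Finset.sum_congr rfl fun j _ => ?_
    rw [show star (x j) * x j = x j * star (x j) by ring, ← Complex.ofReal_pow]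
    exact_mod_cast Complex.mul_conj' _]
  exact Complex.ofReal_re _

lemma rayleigh_low {n : ℕ} (hn : 0 < n) {M : Matrix (Fin n) (Fin n) ℂ} (hM : M.IsHermitian)
    (x : Fin n → ℂ) :
    (Finset.univ.inf' (Finset.univ_nonempty_iff.mpr ⟨⟨0, hn⟩⟩) hM.eigenvalues) * ∑ i, ‖x i‖ ^ 2
      ≤ (star x ⬝ᵥ M *ᵥ x).re := by
  rw [herm_quadform_re hM x, ← norm_pres hM x, Finset.mul_sum]
  refine Finset.sum_le_sum fun i _ => ?_
  exact mul_le_mul_of_nonneg_right (Finset.inf'_le _ (Finset.mem_univ i)) (by positivity)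

lemma count_big {n k : ℕ} {M : Matrix (Fin n) (Fin n) ℂ} (hM : M.IsHermitian) (c : ℝ)
    (V : Submodule ℂ (Fin n → ℂ)) (hVk : k ≤ Module.finrank ℂ V)
    (hq : ∀ x ∈ V, c * (∑ i, ‖x i‖ ^ 2) ≤ (star x ⬝ᵥ M *ᵥ x).re) :
    k ≤ Fintype.card {i // c ≤ hM.eigenvalues i} := by
  by_contra hlt
  push_neg at hlt
  set U : Matrix (Fin n) (Fin n) ℂ := (hM.eigenvectorUnitary : Matrix (Fin n) (Fin n) ℂ) with hU
  let g : (Fin n → ℂ) →ₗ[ℂ] ({i // c ≤ hM.eigenvalues i} → ℂ) :=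
    (LinearMap.funLeft ℂ ℂ Subtype.val).comp (mulVecLin (star U))
  let f := g.comp V.subtype
  have hninj : ¬ Function.Injective f := by
    intro hinj
    have h1 := LinearMap.finrank_le_finrank_of_injective hinj
    rw [Module.finrank_fintype_fun_eq_card] at h1
    omega
  have hker : LinearMap.ker f ≠ ⊥ := fun h => hninj (LinearMap.ker_eq_bot.mp h)
  obtain ⟨x', hx'mem, hx'ne⟩ := (Submodule.ne_bot_iff _).mp hker
  set x : Fin n → ℂ := (x' : Fin n → ℂ) with hx
  have hxV : x ∈ V := x'.2
  have hxne : x ≠ 0 := fun h => hx'ne (Subtype.ext h)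
  set y : Fin n → ℂ := star U *ᵥ x with hy
  have hy0 : ∀ i, c ≤ hM.eigenvalues i → y i = 0 := by
    intro i hi
    have := LinearMap.mem_ker.mp hx'mem
    exact congrFun this ⟨i, hi⟩
  have hxpos : 0 < ∑ i, ‖x i‖ ^ 2 := by
    obtain ⟨i0, hi0⟩ : ∃ i, x i ≠ 0 := by
      by_contra h; push_neg at h; exact hxne (funext h)
    refine Finset.sum_pos' (fun i _ => by positivity) ⟨i0, Finset.mem_univ i0, pow_pos (norm_pos_iff.mpr hi0) 2⟩
  have hpres : ∑ i, ‖y i‖ ^ 2 = ∑ i, ‖x i‖ ^ 2 := norm_pres hM x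
  obtain ⟨i0, hi0⟩ : ∃ i, y i ≠ 0 := by
    by_contra h; push_neg at h
    rw [← hpres] at hxpos
    simp [h] at hxpos
  have hlam0 : hM.eigenvalues i0 < c := by
    by_contra h; push_neg at h; exact hi0 (hy0 i0 h)
  have hstrict : ∑ i, hM.eigenvalues i * ‖y i‖ ^ 2 < ∑ i, c * ‖y i‖ ^ 2 := by
    refine Finset.sum_lt_sum (fun i _ => ?_) ⟨i0, Finset.mem_univ i0, ?_⟩
    · by_cases hci : c ≤ hM.eigenvalues i
      · rw [hy0 i hci]; simp
      · push_neg at hci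
        exact mul_le_mul_of_nonneg_right hci.le (by positivity)
    · exact mul_lt_mul_of_pos_right hlam0 (pow_pos (norm_pos_iff.mpr hi0) 2)
  have hQ := hq x hxV
  rw [herm_quadform_re hM x] at hQ
  have : c * ∑ i, ‖x i‖ ^ 2 < c * ∑ i, ‖x i‖ ^ 2 := by
    calc c * ∑ i, ‖x i‖ ^ 2 ≤ ∑ i, hM.eigenvalues i * ‖y i‖ ^ 2 := hQ
    _ < ∑ i, c * ‖y i‖ ^ 2 := hstrict
    _ = c * ∑ i, ‖y i‖ ^ 2 := by rw [Finset.mul_sum]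
    _ = c * ∑ i, ‖x i‖ ^ 2 := by rw [hpres]
  exact lt_irrefl _ this


lemma nthLargest_ge {n : ℕ} (f : Fin n → ℝ) (c : ℝ) (k : ℕ)
    (hcard : k ≤ Fintype.card {i // c ≤ f i}) (j : Fin n) (hj : (j : ℕ) < k) :
    c ≤ nthLargest f j := by
  have hmono := Tuple.monotone_sort f
  have hanti : Antitone ((f ∘ Tuple.sort f) ∘ Fin.rev) := by
    refine hmono.comp_antitone fun a b hab => ?_
    exact Fin.rev_le_rev.mpr hab
  have key := Tuple.lt_card_ge_iff_apply_ge_of_antitone (f := (f ∘ Tuple.sort f) ∘ Fin.rev) (a := c) hanti (j := j)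
  have hcongr : Fintype.card {i // c ≤ ((f ∘ Tuple.sort f) ∘ Fin.rev) i}
      = Fintype.card {i // c ≤ f i} := by
    refine Fintype.card_congr (Equiv.subtypeEquiv (Fin.revPerm.trans (Tuple.sort f)) fun i => ?_)
    simp [Function.comp]
  exact key.mp (by rw [← Fintype.card_subtype, hcongr]; exact lt_of_lt_of_le hj hcard)

lemma frob_eq_colNorm {l m : Type*} [Fintype l] [Fintype m] (A : Matrix l m ℂ) :
    frob A = Real.sqrt (∑ j, (colNorm A j) ^ 2) := by
  unfold frob colNorm
  rw [Finset.sum_comm]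
  congr 1
  exact Finset.sum_congr rfl fun j _ =>
    (Real.sq_sqrt (Finset.sum_nonneg fun i _ => by positivity)).symm

lemma cs_colNorm {l r : Type*} [Fintype l] [Fintype r] {k : Type*} [Fintype k]
    (A : Matrix l k ℂ) (B : Matrix r k ℂ) :
    ∑ m, colNorm A m * colNorm B m ≤ frob A * frob B := by
  rw [frob_eq_colNorm, frob_eq_colNorm, ← Real.sqrt_mul (Finset.sum_nonneg fun j _ => sq_nonneg _)]
  rw [show (∑ m, colNorm A m * colNorm B m) = Real.sqrt ((∑ m, colNorm A m * colNorm B m)^2) from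
    (Real.sqrt_sq (Finset.sum_nonneg fun m _ =>
      mul_nonneg (Real.sqrt_nonneg _) (Real.sqrt_nonneg _))).symm]
  exact Real.sqrt_le_sqrt (Finset.sum_mul_sq_le_sq_mul_sq _ _ _)

-- squared Gram quadratic form lower bound:
-- ∑‖(ΨᴴΨ)v‖² ≥ iΨ * ∑‖Ψv‖²
lemma gram_sq_low {R k : ℕ} (hk : 0 < k) (Ψ : Matrix (Fin R) (Fin k) ℂ) (v : Fin k → ℂ) :
    (Finset.univ.inf' (Finset.univ_nonempty_iff.mpr ⟨⟨0, hk⟩⟩)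
        (Matrix.isHermitian_conjTranspose_mul_self Ψ).eigenvalues) * ∑ j, ‖(Ψ *ᵥ v) j‖ ^ 2
      ≤ ∑ i, ‖((Ψᴴ * Ψ) *ᵥ v) i‖ ^ 2 := by
  set herm := Matrix.isHermitian_conjTranspose_mul_self Ψ
  set U : Matrix (Fin k) (Fin k) ℂ := (herm.eigenvectorUnitary : Matrix (Fin k) (Fin k) ℂ)
    with hU
  set d : Fin k → ℝ := herm.eigenvalues with hd
  set iΨ := Finset.univ.inf' (Finset.univ_nonempty_iff.mpr ⟨⟨0, hk⟩⟩) herm.eigenvalues with hiΨ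
  have hiΨ0 : 0 ≤ iΨ :=
    Finset.le_inf' _ _ fun i _ => Matrix.eigenvalues_conjTranspose_mul_self_nonneg Ψ i
  have hd0 : ∀ i, 0 ≤ d i := fun i => Matrix.eigenvalues_conjTranspose_mul_self_nonneg Ψ i
  have hdiΨ : ∀ i, iΨ ≤ d i := fun i => Finset.inf'_le _ (Finset.mem_univ i)
  have hGG : (Ψᴴ * Ψ)ᴴ * (Ψᴴ * Ψ) = U * diagonal (fun i => ((d i * d i : ℝ) : ℂ)) * star U := by
    rw [show (Ψᴴ * Ψ)ᴴ = Ψᴴ * Ψ from herm]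
    conv_lhs => rw [herm.spectral_theorem, Unitary.conjStarAlgAut_apply, ← hU]
    have hu : (star U) * U = 1 := Matrix.mem_unitaryGroup_iff'.mp herm.eigenvectorUnitary.2
    have key : ∀ X Y : Matrix (Fin k) (Fin k) ℂ,
        (U * X * star U) * (U * Y * star U) = U * (X * ((star U * U) * Y)) * star U := by
      intros X Y; noncomm_ring
    rw [key, hu, one_mul, diagonal_mul_diagonal]
    congr 1
    congr 1
    funext i
    push_cast
    rfl
  have e1 : ∑ i, ‖((Ψᴴ * Ψ) *ᵥ v) i‖ ^ 2
      = (star v ⬝ᵥ ((Ψᴴ * Ψ)ᴴ * (Ψᴴ * Ψ)) *ᵥ v).re := (selfquad_re _ v).symm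
  have e2 : (star v ⬝ᵥ ((Ψᴴ * Ψ)ᴴ * (Ψᴴ * Ψ)) *ᵥ v).re
      = ∑ i, (d i * d i) * ‖(star U *ᵥ v) i‖ ^ 2 := by
    rw [hGG]; exact quadform_diag_re U (fun i => d i * d i) v
  have e3 : (star v ⬝ᵥ (Ψᴴ * Ψ) *ᵥ v).re = ∑ i, d i * ‖(star U *ᵥ v) i‖ ^ 2 :=
    herm_quadform_re herm v
  have e4 : ∑ j, ‖(Ψ *ᵥ v) j‖ ^ 2 = ∑ i, d i * ‖(star U *ᵥ v) i‖ ^ 2 := by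
    rw [← e3, selfquad_re]
  rw [e1, e2, e4, Finset.mul_sum]
  refine Finset.sum_le_sum fun i _ => ?_
  have hn : (0:ℝ) ≤ ‖(star U *ᵥ v) i‖ ^ 2 := by positivity
  nlinarith [mul_nonneg (mul_nonneg (sub_nonneg.mpr (hdiΨ i)) (hd0 i)) hn]

lemma mulVecLin_inj {R k : ℕ} (hk : 0 < k) (Ψ : Matrix (Fin R) (Fin k) ℂ)
    (hpos : 0 < Finset.univ.inf' (Finset.univ_nonempty_iff.mpr ⟨⟨0, hk⟩⟩)
      (Matrix.isHermitian_conjTranspose_mul_self Ψ).eigenvalues) :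
    Function.Injective (Matrix.mulVecLin Ψ) := by
  rw [← LinearMap.ker_eq_bot, Submodule.eq_bot_iff]
  intro v hv
  have hv' : Ψ *ᵥ v = 0 := by
    rwa [LinearMap.mem_ker, Matrix.mulVecLin_apply] at hv
  have h1 : (star v ⬝ᵥ (Ψᴴ * Ψ) *ᵥ v).re = 0 := by
    rw [selfquad_re, hv']; simp
  have h2 := rayleigh_low hk (Matrix.isHermitian_conjTranspose_mul_self Ψ) v
  rw [h1] at h2
  have hsum0 : ∑ i, ‖v i‖ ^ 2 = 0 := by
    have hnn : 0 ≤ ∑ i, ‖v i‖ ^ 2 := Finset.sum_nonneg fun i _ => by positivity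
    nlinarith [h2, hpos, hnn]
  funext i
  have := (Finset.sum_eq_zero_iff_of_nonneg (fun i _ => by positivity)).mp hsum0 i
    (Finset.mem_univ i)
  simpa [pow_eq_zero_iff] using this


set_option maxHeartbeats 1000000 in
/-- under the uniform overlap condition for both `Φ` and `Ψ`, each of the `k`
largest singular values of `Φ·Ψᴴ` is at least `p_min/(1+χ)²`, where
`p_min = min_m ‖Φ_{:,m}‖·‖Ψ_{:,m}‖`; in particular `s_k(Φ·Ψᴴ) ≥ p_min/(1+χ)²`. -/
theorem stmt19 (L R k : ℕ) (hL : 0 < L) (hR : 0 < R) (hk : 0 < k) (χ : ℝ) (hχ : 0 < χ)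
    (Φ : Matrix (Fin L) (Fin k) ℂ) (Ψ : Matrix (Fin R) (Fin k) ℂ)
    (hΦ : frob Φ / ((1 + χ) * Real.sqrt k) ≤ smin hk Φ)
    (hΨ : frob Ψ / ((1 + χ) * Real.sqrt k) ≤ smin hk Ψ) :
    ∀ j : Fin R, (j : ℕ) < k →
      (Finset.univ.inf' (Finset.univ_nonempty_iff.mpr ⟨⟨0, hk⟩⟩)
          fun m => colNorm Φ m * colNorm Ψ m) / (1 + χ) ^ 2 ≤
        nthLargest (sv (Φ * Ψᴴ)) j := by
  intro j hj
  classical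
  set pm := (Finset.univ.inf' (Finset.univ_nonempty_iff.mpr ⟨⟨0, hk⟩⟩)
      fun m => colNorm Φ m * colNorm Ψ m) with hpmdef
  have hχ1 : (0:ℝ) < 1 + χ := by linarith
  have hpm0 : 0 ≤ pm :=
    Finset.le_inf' _ _ fun m _ => mul_nonneg (Real.sqrt_nonneg _) (Real.sqrt_nonneg _)
  have hsvnn : ∀ i, 0 ≤ sv (Φ * Ψᴴ) i := fun i => Real.sqrt_nonneg _
  by_cases hpz : pm = 0
  · rw [hpz, zero_div]
    exact hsvnn _
  have hppos : 0 < pm := lt_of_le_of_ne hpm0 (Ne.symm hpz)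
  set a := smin hk Φ with ha
  set b := smin hk Ψ with hb
  have ha0 : 0 ≤ a := Real.sqrt_nonneg _
  have hb0 : 0 ≤ b := Real.sqrt_nonneg _
  have hk0 : (0:ℝ) < (k:ℝ) := by exact_mod_cast hk
  have hsk : (0:ℝ) < Real.sqrt k := Real.sqrt_pos.mpr hk0
  have hfa : frob Φ ≤ a * ((1+χ) * Real.sqrt k) := by
    rw [div_le_iff₀ (by positivity)] at hΦ; exact hΦ
  have hfb : frob Ψ ≤ b * ((1+χ) * Real.sqrt k) := by
    rw [div_le_iff₀ (by positivity)] at hΨ; exact hΨ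
  have hfrob0 : 0 ≤ frob Φ := Real.sqrt_nonneg _
  have hfrob0' : 0 ≤ frob Ψ := Real.sqrt_nonneg _
  have hCS := cs_colNorm Φ Ψ
  have hsum : (k:ℝ) * pm ≤ ∑ m, colNorm Φ m * colNorm Ψ m := by
    have := Finset.card_nsmul_le_sum Finset.univ
      (fun m => colNorm Φ m * colNorm Ψ m) pm
      (fun m _ => Finset.inf'_le _ (Finset.mem_univ m))
    simpa [nsmul_eq_mul] using this
  have hmul : frob Φ * frob Ψ ≤ (a * b) * ((1+χ)^2 * (k:ℝ)) := by
    have h1 : frob Φ * frob Ψ ≤ (a * ((1+χ) * Real.sqrt k)) * (b * ((1+χ) * Real.sqrt k)) :=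
      mul_le_mul hfa hfb hfrob0' (by positivity)
    have hsq : Real.sqrt k * Real.sqrt k = (k:ℝ) := Real.mul_self_sqrt hk0.le
    have h2 : a * ((1+χ) * Real.sqrt k) * (b * ((1+χ) * Real.sqrt k))
        = (a*b) * ((1+χ)^2 * (Real.sqrt k * Real.sqrt k)) := by ring
    rw [hsq] at h2
    linarith
  have hab : pm / (1+χ)^2 ≤ a * b := by
    rw [div_le_iff₀ (by positivity)]
    have hchain : (k:ℝ) * pm ≤ (a*b) * ((1+χ)^2 * (k:ℝ)) :=
      le_trans hsum (le_trans hCS hmul)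
    nlinarith [hchain, hk0]
  set c := pm / (1+χ)^2 with hc
  have hc0 : 0 ≤ c := div_nonneg hpm0 (by positivity)
  have hcpos : 0 < c := div_pos hppos (by positivity)
  have habpos : 0 < a * b := lt_of_lt_of_le hcpos hab
  have hbpos : 0 < b := by
    rcases lt_or_eq_of_le hb0 with h | h
    · exact h
    · exfalso; rw [← h] at habpos; simp at habpos
  have hapos : 0 < a := by
    rcases lt_or_eq_of_le ha0 with h | h
    · exact h
    · exfalso; rw [← h] at habpos; simp at habpos
  -- eigenvalue infima
  set iΦ := Finset.univ.inf' (Finset.univ_nonempty_iff.mpr ⟨⟨0, hk⟩⟩)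
      (Matrix.isHermitian_conjTranspose_mul_self Φ).eigenvalues with hiΦdef
  set iΨ := Finset.univ.inf' (Finset.univ_nonempty_iff.mpr ⟨⟨0, hk⟩⟩)
      (Matrix.isHermitian_conjTranspose_mul_self Ψ).eigenvalues with hiΨdef
  have hiΦ0 : 0 ≤ iΦ :=
    Finset.le_inf' _ _ fun i _ =>
      Matrix.eigenvalues_conjTranspose_mul_self_nonneg Φ i
  have hiΨ0 : 0 ≤ iΨ :=
    Finset.le_inf' _ _ fun i _ =>
      Matrix.eigenvalues_conjTranspose_mul_self_nonneg Ψ i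
  have haiΦ : a ^ 2 = iΦ := Real.sq_sqrt hiΦ0
  have hbiΨ : b ^ 2 = iΨ := Real.sq_sqrt hiΨ0
  have hiΨpos : 0 < iΨ := by rw [← hbiΨ]; positivity
  -- injectivity of v ↦ Ψ *ᵥ v
  have hinj : Function.Injective (Matrix.mulVecLin Ψ) := by
    rw [← LinearMap.ker_eq_bot, Submodule.eq_bot_iff]
    intro v hv
    have hv' : Ψ *ᵥ v = 0 := by
      rwa [LinearMap.mem_ker, Matrix.mulVecLin_apply] at hv
    have h1 : (star v ⬝ᵥ (Ψᴴ * Ψ) *ᵥ v).re = 0 := by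
      rw [selfquad_re, hv']; simp
    have h2 := rayleigh_low hk (Matrix.isHermitian_conjTranspose_mul_self Ψ) v
    rw [h1] at h2
    have hsum0 : ∑ i, ‖v i‖ ^ 2 = 0 := by
      have hnn : 0 ≤ ∑ i, ‖v i‖ ^ 2 := Finset.sum_nonneg fun i _ => by positivity
      nlinarith [h2, hiΨpos, hnn]
    funext i
    have := (Finset.sum_eq_zero_iff_of_nonneg (fun i _ => by positivity)).mp hsum0 i
      (Finset.mem_univ i)
    simpa [pow_eq_zero_iff] using this
  set V := LinearMap.range (Matrix.mulVecLin Ψ) with hVdef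
  have hVk : Module.finrank ℂ V = k := by
    rw [LinearMap.finrank_range_of_inj hinj, Module.finrank_fintype_fun_eq_card,
      Fintype.card_fin]
  have hinj : Function.Injective (Matrix.mulVecLin Ψ) := mulVecLin_inj hk Ψ hiΨpos
  set V := LinearMap.range (Matrix.mulVecLin Ψ) with hVdef
  have hVk : Module.finrank ℂ V = k := by
    rw [LinearMap.finrank_range_of_inj hinj, Module.finrank_fintype_fun_eq_card,
      Fintype.card_fin]
  have hc2 : c ^ 2 ≤ iΦ * iΨ := by
    nlinarith [mul_self_le_mul_self hc0 hab, haiΦ, hbiΨ]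
  have hq : ∀ x ∈ V, c ^ 2 * (∑ i, ‖x i‖ ^ 2)
      ≤ (star x ⬝ᵥ ((Φ * Ψᴴ)ᴴ * (Φ * Ψᴴ)) *ᵥ x).re := by
    rintro x ⟨v, rfl⟩
    simp only [Matrix.mulVecLin_apply]
    set x := Ψ *ᵥ v with hx
    set z := Ψᴴ *ᵥ x with hz
    have e1 : (star x ⬝ᵥ ((Φ * Ψᴴ)ᴴ * (Φ * Ψᴴ)) *ᵥ x).re = ∑ j, ‖((Φ * Ψᴴ) *ᵥ x) j‖ ^ 2 :=
      selfquad_re _ x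
    have e2 : (Φ * Ψᴴ) *ᵥ x = Φ *ᵥ z := (mulVec_mulVec _ _ _).symm
    have e3 : ∑ j, ‖(Φ *ᵥ z) j‖ ^ 2 = (star z ⬝ᵥ (Φᴴ * Φ) *ᵥ z).re := (selfquad_re Φ z).symm
    have e4 := rayleigh_low hk (Matrix.isHermitian_conjTranspose_mul_self Φ) z
    have e5 : z = (Ψᴴ * Ψ) *ᵥ v := by rw [hz, hx, mulVec_mulVec]
    have e6 : iΨ * ∑ j, ‖x j‖ ^ 2 ≤ ∑ i, ‖z i‖ ^ 2 := by
      rw [e5]; exact gram_sq_low hk Ψ v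
    have hxnn : 0 ≤ ∑ i, ‖x i‖ ^ 2 := Finset.sum_nonneg fun i _ => by positivity
    have hznn : 0 ≤ ∑ i, ‖z i‖ ^ 2 := Finset.sum_nonneg fun i _ => by positivity
    rw [e1, e2, e3]
    calc c ^ 2 * (∑ i, ‖x i‖ ^ 2) ≤ (iΦ * iΨ) * (∑ i, ‖x i‖ ^ 2) := by
          exact mul_le_mul_of_nonneg_right hc2 hxnn
      _ ≤ iΦ * ∑ i, ‖z i‖ ^ 2 := by
          rw [mul_assoc]
          exact mul_le_mul_of_nonneg_left e6 hiΦ0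
      _ ≤ (star z ⬝ᵥ (Φᴴ * Φ) *ᵥ z).re := e4
  have hcard := count_big (Matrix.isHermitian_conjTranspose_mul_self (Φ * Ψᴴ)) (c ^ 2) V hVk.ge hq
  have hmap : ∀ i, c ^ 2 ≤ (Matrix.isHermitian_conjTranspose_mul_self (Φ * Ψᴴ)).eigenvalues i →
      c ≤ sv (Φ * Ψᴴ) i := by
    intro i hi
    have h := Real.sqrt_le_sqrt hi
    rwa [Real.sqrt_sq hc0] at h
  have hcard2 : k ≤ Fintype.card {i // c ≤ sv (Φ * Ψᴴ) i} := by
    refine hcard.trans (Fintype.card_le_of_injective (fun p => ⟨p.1, hmap p.1 p.2⟩) ?_)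
    intro p q h
    simp only [Subtype.mk.injEq] at h
    exact Subtype.ext h
  exact nthLargest_ge _ c k hcard2 j hj
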